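/- For every real y ≠ 0, ∫_{−1}^{1} √(1 − x²)·cos(2πxy) dx = J₁(2πy)/(2y). -/

import Mathlib

open Real

/-- The Bessel function of the first kind of order one, defined by its
everywhere-convergent power series. -/
noncomputable def J1 (x : ℝ) : ℝ :=
  ∑' k : ℕ, (-1 : ℝ) ^ k / ((Nat.factorial k : ℝ) * (Nat.factorial (k + 1) : ℝ)) * (x / 2) ^ (2 * k + 1)

/-- The even-power sine integral over `[-π/2, π/2]`. -/
lemma sin_even_int (k : ℕ) :
    ∫ θ in (-(π/2))..(π/2), Real.sin θ ^ (2 * k)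
      = π * (Nat.factorial (2 * k) : ℝ) / (4 ^ k * (Nat.factorial k : ℝ) ^ 2) := by
  induction k with
  | zero => simp
  | succ k ih =>
    rw [show 2 * (k + 1) = 2 * k + 2 from by ring, integral_sin_pow (2 * k), ih,
      Real.cos_pi_div_two, Real.cos_neg, Real.cos_pi_div_two]
    have hfk : ((2 * k + 2).factorial : ℝ)
        = (2 * (k:ℝ) + 2) * ((2 * (k:ℝ) + 1) * ((2 * k).factorial : ℝ)) := by
      rw [show 2 * k + 2 = (2 * k + 1) + 1 from rfl, Nat.factorial_succ, Nat.factorial_succ]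
      push_cast; ring
    have hfk1 : ((k + 1).factorial : ℝ) = ((k:ℝ) + 1) * (k.factorial : ℝ) := by
      rw [Nat.factorial_succ]; push_cast; ring
    rw [hfk, hfk1, show (4:ℝ) ^ (k + 1) = 4 * 4 ^ k from by ring]
    have h4 : (4:ℝ) ^ k ≠ 0 := by positivity
    have hk0 : (Nat.factorial k : ℝ) ≠ 0 := by positivity
    have hk1 : (k:ℝ) + 1 ≠ 0 := by positivity
    have h2k : ((2 * k).factorial : ℝ) ≠ 0 := by positivity
    have h2k2 : ((2 * k : ℕ) : ℝ) + 2 ≠ 0 := by positivity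
    push_cast
    field_simp
    ring

/-- The moment integral of the semicircle. -/
lemma moment (k : ℕ) :
    ∫ x in (-1:ℝ)..1, x ^ (2 * k) * Real.sqrt (1 - x ^ 2)
      = π * (Nat.factorial (2 * k) : ℝ)
        / (2 * 4 ^ k * (Nat.factorial k : ℝ) * (Nat.factorial (k + 1) : ℝ)) := by
  have hsub : (∫ θ in (-(π/2))..(π/2),
        Real.cos θ • ((fun x => x ^ (2 * k) * Real.sqrt (1 - x ^ 2)) ∘ Real.sin) θ)
      = ∫ x in Real.sin (-(π/2))..Real.sin (π/2),
          x ^ (2 * k) * Real.sqrt (1 - x ^ 2) := by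
    apply intervalIntegral.integral_comp_smul_deriv
    · intro x _; exact Real.hasDerivAt_sin x
    · exact Real.continuous_cos.continuousOn
    · exact continuous_pow _ |>.mul (Real.continuous_sqrt.comp (by continuity))
  rw [Real.sin_neg, Real.sin_pi_div_two] at hsub
  have hEq : ∀ θ ∈ Set.uIcc (-(π/2)) (π/2),
      Real.cos θ • ((fun x => x ^ (2 * k) * Real.sqrt (1 - x ^ 2)) ∘ Real.sin) θ
        = Real.sin θ ^ (2 * k) - Real.sin θ ^ (2 * k + 2) := by
    intro θ hθ
    have hθ' : θ ∈ Set.Icc (-(π/2)) (π/2) := by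
      rwa [Set.uIcc_of_le (by linarith [Real.pi_pos])] at hθ
    have hc : 0 ≤ Real.cos θ := Real.cos_nonneg_of_mem_Icc hθ'
    have h1 : Real.sqrt (1 - Real.sin θ ^ 2) = Real.cos θ := by
      rw [show 1 - Real.sin θ ^ 2 = Real.cos θ ^ 2 by
        have := Real.sin_sq_add_cos_sq θ; linarith]
      exact Real.sqrt_sq hc
    simp only [Function.comp_apply, smul_eq_mul, h1]
    have hcs : Real.cos θ ^ 2 = 1 - Real.sin θ ^ 2 := by
      have := Real.sin_sq_add_cos_sq θ; linarith
    calc Real.cos θ * (Real.sin θ ^ (2 * k) * Real.cos θ)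
        = Real.sin θ ^ (2*k) * Real.cos θ ^ 2 := by ring
      _ = Real.sin θ ^ (2*k) * (1 - Real.sin θ ^ 2) := by rw [hcs]
      _ = Real.sin θ ^ (2 * k) - Real.sin θ ^ (2 * k + 2) := by ring
  rw [intervalIntegral.integral_congr hEq] at hsub
  rw [intervalIntegral.integral_sub (f := fun x => Real.sin x ^ (2 * k))
      (g := fun x => Real.sin x ^ (2 * k + 2))
      ((Real.continuous_sin.pow _).intervalIntegrable _ _)
      ((Real.continuous_sin.pow _).intervalIntegrable _ _)] at hsub
  rw [show 2 * k + 2 = 2 * (k + 1) from by ring] at hsub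
  rw [sin_even_int k, sin_even_int (k+1)] at hsub
  rw [← hsub]
  have hfk : ((2 * (k + 1)).factorial : ℝ)
      = (2 * (k:ℝ) + 2) * ((2 * (k:ℝ) + 1) * ((2 * k).factorial : ℝ)) := by
    rw [show 2 * (k+1) = (2 * k + 1) + 1 from by ring, Nat.factorial_succ, Nat.factorial_succ]
    push_cast; ring
  have hfk1 : ((k + 1).factorial : ℝ) = ((k:ℝ) + 1) * (k.factorial : ℝ) := by
    rw [Nat.factorial_succ]; push_cast; ring
  rw [hfk, hfk1, show (4:ℝ) ^ (k+1) = 4 * 4 ^ k from by ring]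
  have h4 : (4:ℝ) ^ k ≠ 0 := by positivity
  have hk0 : (Nat.factorial k : ℝ) ≠ 0 := by positivity
  have hk1 : (k:ℝ) + 1 ≠ 0 := by positivity
  have h2k : ((2 * k).factorial : ℝ) ≠ 0 := by positivity
  field_simp
  ring

theorem stmt_5 (y : ℝ) (hy : y ≠ 0) :
    ∫ x in (-1 : ℝ)..1, Real.sqrt (1 - x ^ 2) * Real.cos (2 * π * x * y)
      = J1 (2 * π * y) / (2 * y) := by
  set a : ℝ := 2 * π * y with ha
  have key : HasSum
      (fun k : ℕ => ∫ x in (-1:ℝ)..1,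
        Real.sqrt (1 - x ^ 2) * ((-1:ℝ) ^ k * (a * x) ^ (2 * k) / (Nat.factorial (2 * k))))
      (∫ x in (-1:ℝ)..1, Real.sqrt (1 - x ^ 2) * Real.cos (a * x)) := by
    apply intervalIntegral.hasSum_integral_of_dominated_convergence
      (bound := fun k _ => |a| ^ (2 * k) / (Nat.factorial (2 * k)))
    · intro k
      apply Continuous.aestronglyMeasurable
      continuity
    · intro k
      filter_upwards with t ht
      have ht' : t ∈ Set.Ioc (-1:ℝ) 1 := by
        rwa [Set.uIoc_of_le (by norm_num : (-1:ℝ) ≤ 1)] at ht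
      have h1 : |t| ≤ 1 := abs_le.mpr ⟨le_of_lt ht'.1, ht'.2⟩
      have hs : |Real.sqrt (1 - t ^ 2)| ≤ 1 := by
        rw [abs_of_nonneg (Real.sqrt_nonneg _)]
        exact Real.sqrt_le_one.mpr (by nlinarith [sq_nonneg t])
      have hb : |a * t| ≤ |a| := by
        rw [abs_mul]
        calc |a| * |t| ≤ |a| * 1 := mul_le_mul_of_nonneg_left h1 (abs_nonneg _)
          _ = |a| := mul_one _
      have hmain : |Real.sqrt (1 - t ^ 2)| * (|a * t| ^ (2 * k) / ((Nat.factorial (2 * k) : ℝ)))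
          ≤ 1 * (|a| ^ (2 * k) / ((Nat.factorial (2 * k) : ℝ))) := by
        gcongr
      calc ‖Real.sqrt (1 - t ^ 2) * ((-1:ℝ) ^ k * (a * t) ^ (2 * k) / (Nat.factorial (2 * k)))‖
          = |Real.sqrt (1 - t ^ 2)| * (|a * t| ^ (2 * k) / (Nat.factorial (2 * k))) := by
            rw [Real.norm_eq_abs, abs_mul, abs_div, abs_mul, abs_pow, abs_pow, abs_neg, abs_one,
              one_pow, one_mul, Nat.abs_cast]
        _ ≤ 1 * (|a| ^ (2 * k) / (Nat.factorial (2 * k))) := hmain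
        _ = |a| ^ (2 * k) / (Nat.factorial (2 * k)) := one_mul _
    · filter_upwards with t _
      exact (Real.summable_pow_div_factorial |a|).comp_injective
        (fun m n h => by omega)
    · exact intervalIntegrable_const
    · filter_upwards with t _
      exact (Real.hasSum_cos (a * t)).mul_left _
  have hterm : ∀ k : ℕ,
      (∫ x in (-1:ℝ)..1,
        Real.sqrt (1 - x ^ 2) * ((-1:ℝ) ^ k * (a * x) ^ (2 * k) / (Nat.factorial (2 * k))))
      = (-1:ℝ) ^ k / ((Nat.factorial k : ℝ) * (Nat.factorial (k + 1) : ℝ))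
          * (a / 2) ^ (2 * k + 1) / (2 * y) := by
    intro k
    have hc : ∀ x : ℝ, Real.sqrt (1 - x ^ 2) * ((-1:ℝ) ^ k * (a * x) ^ (2 * k) / (Nat.factorial (2 * k)))
        = ((-1:ℝ) ^ k * a ^ (2 * k) / (Nat.factorial (2 * k))) * (x ^ (2*k) * Real.sqrt (1 - x ^ 2)) := by
      intro x; rw [mul_pow]; ring
    rw [intervalIntegral.integral_congr (fun x _ => hc x),
      intervalIntegral.integral_const_mul, moment k]
    have hpy : a / 2 = π * y := by rw [ha]; ring
    have hp4 : a ^ (2 * k) = 4 ^ k * (π * y) ^ (2 * k) := by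
      rw [ha, show (2:ℝ) * π * y = 2 * (π * y) by ring, mul_pow, pow_mul]
      norm_num
    rw [hp4, hpy]
    have h2k : ((2 * k).factorial : ℝ) ≠ 0 := by positivity
    have hk0 : (Nat.factorial k : ℝ) ≠ 0 := by positivity
    have hk1 : ((k+1).factorial : ℝ) ≠ 0 := by positivity
    have h4 : (4:ℝ) ^ k ≠ 0 := by positivity
    rw [pow_succ]
    field_simp
  rw [show (fun x : ℝ => Real.sqrt (1 - x ^ 2) * Real.cos (2 * π * x * y))
      = fun x : ℝ => Real.sqrt (1 - x ^ 2) * Real.cos (a * x) from by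
    funext x; rw [ha]; ring_nf]
  rw [← key.tsum_eq]
  simp only [J1]
  rw [← tsum_div_const]
  exact tsum_congr fun k => hterm k
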